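/- Sub-critical remainder R₂ vanishes: under the assumptions of the sub-critical CLT ((F), (H2) with α ∈ (0,1/√2), and 𝔣 = (f_ℓ) satisfying (H2) uniformly), for any nondecreasing sequence (p_n) of positive integers with p_n < n, p_n/n → 1 and n − p_n − λ log n → ∞ for all λ > 0, the quantity R₂(n) = ∑_{i∈𝔾_{n-p_n}} (E[N_{n,i}(𝔣) | X_i])² = |𝔾_n|^{-1} ∑_{i∈𝔾_{n-p_n}} (∑_{ℓ=0}^{p_n} 2^{p_n-ℓ} (𝒬^{p_n-ℓ} f̃_ℓ)(X_i))² satisfies lim_{n→∞} E[R₂(n)] = 0. -/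

import Mathlib

open MeasureTheory ProbabilityTheory Filter Finset
open scoped NNReal Topology

noncomputable section

namespace BMC

variable {S : Type*} [MeasurableSpace S] {Ω : Type*} [MeasurableSpace Ω]

/-- The `n`-th generation `𝔾_n` of the binary tree, as a finset of `List Bool`. -/
def gen (n : ℕ) : Finset (List Bool) :=
  (Finset.univ : Finset (Fin n → Bool)).image List.ofFn

/-- The tree `𝕋_n` up to generation `n`. -/
def treeUpTo (n : ℕ) : Finset (List Bool) :=
  (Finset.range (n + 1)).biUnion gen

/-- The descendants `i𝔾_m` of `i` that are `m` generations below `i`. -/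
def desc (i : List Bool) (m : ℕ) : Finset (List Bool) :=
  (gen m).image fun j => i ++ j

/-- `M_A(f) = ∑_{i ∈ A} f(X_i)`. -/
def MA (X : List Bool → Ω → S) (A : Finset (List Bool)) (f : S → ℝ) (ω : Ω) : ℝ :=
  ∑ i ∈ A, f (X i ω)

/-- Complex-valued version of `M_A(f)`. -/
def MAC (X : List Bool → Ω → S) (A : Finset (List Bool)) (f : S → ℂ) (ω : Ω) : ℂ :=
  ∑ i ∈ A, f (X i ω)

/-- `𝒫(f ⊗ g)(x) = ∫ f(y) g(z) 𝒫(x, dy, dz)`. -/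
def Ptens (P : Kernel S (S × S)) (f g : S → ℝ) (x : S) : ℝ :=
  ∫ p, f p.1 * g p.2 ∂(P x)

/-- `𝒫(f ⊗_sym g)(x) = ∫ (f(y) g(z) + g(y) f(z))/2 𝒫(x, dy, dz)`. -/
def PtensSym (P : Kernel S (S × S)) (f g : S → ℝ) (x : S) : ℝ :=
  ∫ p, (f p.1 * g p.2 + g p.1 * f p.2) / 2 ∂(P x)

/-- Complex version of `𝒫(f ⊗_sym g)`. -/
def PtensSymC (P : Kernel S (S × S)) (f g : S → ℂ) (x : S) : ℂ :=
  ∫ p, (f p.1 * g p.2 + g p.1 * f p.2) / 2 ∂(P x)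

/-- The operator `𝒬 f (x) = ∫ (f(y)+f(z))/2 𝒫(x, dy, dz)`, i.e. the action of the
Markov kernel `𝒬 = (P₀ + P₁)/2` on functions. -/
def Qop (P : Kernel S (S × S)) (f : S → ℝ) (x : S) : ℝ :=
  ∫ p, (f p.1 + f p.2) / 2 ∂(P x)

/-- The iterated operator `𝒬ⁿ`. -/
def Qiter (P : Kernel S (S × S)) (n : ℕ) (f : S → ℝ) : S → ℝ := (Qop P)^[n] f

/-- Complex version of `𝒬`. -/
def QopC (P : Kernel S (S × S)) (f : S → ℂ) (x : S) : ℂ :=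
  ∫ p, (f p.1 + f p.2) / 2 ∂(P x)

/-- Complex version of `𝒬ⁿ`. -/
def QiterC (P : Kernel S (S × S)) (n : ℕ) (f : S → ℂ) : S → ℂ := (QopC P)^[n] f

/-- `⟨μ, f⟩ = ∫ f dμ`. -/
def mInt (μ : Measure S) (f : S → ℝ) : ℝ := ∫ x, f x ∂μ

/-- Complex `⟨μ, f⟩`. -/
def mIntC (μ : Measure S) (f : S → ℂ) : ℂ := ∫ x, f x ∂μ

/-- `f̃ = f - ⟨μ, f⟩`. -/
def ctr (μ : Measure S) (f : S → ℝ) (x : S) : ℝ := f x - mInt μ f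

/-- Coercion of a real function to a complex one. -/
def cf (f : S → ℝ) : S → ℂ := fun x => (f x : ℂ)

/-- The σ-field `ℋ_n = σ(X_j, j ∈ 𝕋_n)`. -/
def sigmaTree (X : List Bool → Ω → S) (n : ℕ) : MeasurableSpace Ω :=
  ⨆ j ∈ treeUpTo n, MeasurableSpace.comap (X j) inferInstance

lemma treeUpTo_mono {a b : ℕ} (h : a ≤ b) : treeUpTo a ⊆ treeUpTo b := by
  intro i hi
  simp only [treeUpTo, Finset.mem_biUnion, Finset.mem_range] at hi ⊢
  obtain ⟨r, hr, hir⟩ := hi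
  exact ⟨r, lt_of_lt_of_le hr (by omega), hir⟩

/-- The filtration `(ℋ_n = σ(X_i, i ∈ 𝕋_n))_{n ∈ ℕ}`. -/
def natFiltration (X : List Bool → Ω → S) (hX : ∀ i, Measurable (X i)) :
    Filtration ℕ (inferInstance : MeasurableSpace Ω) where
  seq n := sigmaTree X n
  mono' := by
    intro a b hab
    exact biSup_mono fun j hj => treeUpTo_mono hab hj
  le' n := by
    refine iSup₂_le fun j _ => ?_
    exact (hX j).comap_le

/-- `X = (X_i, i ∈ 𝕋)` is a bifurcating Markov chain on `(S, 𝒮)` with initial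
distribution `ν` and probability kernel `𝒫`, under the probability measure `m` on `Ω`. -/
structure IsBMC (P : Kernel S (S × S)) (ν : Measure S) (m : Measure Ω)
    (X : List Bool → Ω → S) : Prop where
  meas : ∀ i, Measurable (X i)
  init : m.map (X []) = ν
  branching : ∀ (n : ℕ) (g : List Bool → S → S × S → ℝ),
    (∀ i, Measurable fun q : S × S × S => g i q.1 q.2) →
    (∀ i, ∃ C, ∀ x p, |g i x p| ≤ C) →
    (m[fun ω => ∏ i ∈ gen n, g i (X i ω) (X (i ++ [false]) ω, X (i ++ [true]) ω)
        | sigmaTree X n]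
      =ᵐ[m] fun ω => ∏ i ∈ gen n, ∫ p, g i (X i ω) p ∂(P (X i ω)))

/-- Structural Assumption (F) on the set of functions `F`. -/
structure AssumpF (P : Kernel S (S × S)) (ν : Measure S) (F : Set (S → ℝ)) : Prop where
  meas : ∀ f ∈ F, Measurable f
  add_mem : ∀ f ∈ F, ∀ g ∈ F, f + g ∈ F
  smul_mem : ∀ (c : ℝ), ∀ f ∈ F, c • f ∈ F
  const_mem : ∀ c : ℝ, (fun _ : S => c) ∈ F
  sq_mem : ∀ f ∈ F, (fun x => f x ^ 2) ∈ F
  int_nu : ∀ f ∈ F, Integrable f ν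
  tens_int : ∀ f₀ ∈ F, ∀ f₁ ∈ F, ∀ x : S,
    Integrable (fun p : S × S => f₀ p.1 * f₁ p.2) (P x)
  tens_mem : ∀ f₀ ∈ F, ∀ f₁ ∈ F, Ptens P f₀ f₁ ∈ F

/-- Geometric ergodicity Assumption (H2) with rate `α`. -/
structure AssumpH2 (P : Kernel S (S × S)) (F : Set (S → ℝ)) (μ : Measure S) (α : ℝ) :
    Prop where
  prob : IsProbabilityMeasure μ
  int_mu : ∀ f ∈ F, Integrable f μ
  erg : ∀ f ∈ F, ∃ g ∈ F, ∀ (n : ℕ) (x : S), |Qiter P n f x - mInt μ f| ≤ α ^ n * g x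

/-- A sequence `𝔣` satisfies Assumption (H2) uniformly, with dominating function `g`. -/
def UnifH2 (P : Kernel S (S × S)) (μ : Measure S) (α : ℝ) (𝔣 : ℕ → S → ℝ) (g : S → ℝ) :
    Prop :=
  ∀ (n ℓ : ℕ) (x : S), |Qiter P n (𝔣 ℓ) x| ≤ g x ∧
    |Qiter P n (𝔣 ℓ) x - mInt μ (𝔣 ℓ)| ≤ α ^ n * g x

/-- `N_{n,∅}(𝔣) = |𝔾_n|^{-1/2} ∑_{ℓ=0}^n M_{𝔾_{n-ℓ}}(f̃_ℓ)`. -/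
def Nroot (μ : Measure S) (X : List Bool → Ω → S) (𝔣 : ℕ → S → ℝ) (n : ℕ) (ω : Ω) : ℝ :=
  (Real.sqrt (2 ^ n))⁻¹ * ∑ ℓ ∈ Finset.range (n + 1), MA X (gen (n - ℓ)) (ctr μ (𝔣 ℓ)) ω

/-- `N_{n,i}(𝔣) = |𝔾_n|^{-1/2} ∑_{ℓ=0}^{n-|i|} M_{i𝔾_{n-|i|-ℓ}}(f̃_ℓ)`. -/
def Nni (μ : Measure S) (X : List Bool → Ω → S) (𝔣 : ℕ → S → ℝ) (n : ℕ) (i : List Bool)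
    (ω : Ω) : ℝ :=
  (Real.sqrt (2 ^ n))⁻¹ *
    ∑ ℓ ∈ Finset.range (n - i.length + 1), MA X (desc i (n - i.length - ℓ)) (ctr μ (𝔣 ℓ)) ω

/-- Convergence in distribution to a centered Gaussian with variance `v`, expressed by
convergence of integrals of bounded continuous test functions. -/
def TendstoGauss (m : Measure Ω) (Y : ℕ → Ω → ℝ) (v : ℝ≥0) : Prop :=
  ∀ φ : BoundedContinuousFunction ℝ ℝ,
    Tendsto (fun n => ∫ ω, φ (Y n ω) ∂m) atTop (𝓝 (∫ x, φ x ∂(gaussianReal 0 v)))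

/-- Assumption (H3): a second spectral gap, with rate `α`, eigenvalues `(αj j)_{j ∈ J}`
of modulus `α`, projectors `R j`, and speed `β`. -/
structure AssumpH3 (P : Kernel S (S × S)) (F : Set (S → ℝ)) (μ : Measure S) (α : ℝ)
    {J : Type*} [Fintype J] [DecidableEq J] (αj : J → ℂ) (R : J → (S → ℂ) → S → ℂ) (β : ℕ → ℝ) :
    Prop where
  prob : IsProbabilityMeasure μ
  int_mu : ∀ f ∈ F, Integrable f μ
  nonempty : Nonempty J
  inj : Function.Injective αj
  abs_eq : ∀ j, ‖αj j‖ = α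
  Rlin : ∀ (j : J) (c : ℂ) (f g : S → ℂ),
    R j (fun x => c * f x + g x) = fun x => c * R j f x + R j g x
  Rorth : ∀ (j j' : J) (f : S → ℂ), R j (R j' f) = if j = j' then R j f else fun _ => 0
  Rne : ∀ j : J, ∃ f ∈ F, R j (cf f) ≠ fun _ => 0
  Rmeas : ∀ (j : J) (f : S → ℂ), Measurable f → Measurable (R j f)
  Reig : ∀ (j : J) (f : S → ℂ), QopC P (R j f) = fun x => αj j * R j f x
  βpos : ∀ n, 0 < β n
  βle : ∀ n, β n ≤ 1
  βanti : Antitone β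
  βlim : Tendsto β atTop (𝓝 0)
  erg : ∀ f ∈ F, ∃ g ∈ F, ∀ (n : ℕ) (x : S),
    ‖QiterC P n (cf f) x - (mInt μ f : ℂ)
      - (α : ℂ) ^ n * ∑ j, (αj j / (α : ℂ)) ^ n * R j (cf f) x‖ ≤ β n * α ^ n * g x

/-- `f̂ = f̃ - ∑_{j ∈ J} ℛ_j(f)`, as a complex-valued function. -/
def fhat {J : Type*} [Fintype J] (μ : Measure S) (R : J → (S → ℂ) → S → ℂ)
    (f : S → ℝ) : S → ℂ :=
  fun x => (ctr μ f x : ℂ) - ∑ j, R j (cf f) x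

/-- A sequence `𝔣` satisfies Assumption (H3) uniformly, with dominating function `g`. -/
def UnifH3 {J : Type*} [Fintype J] (P : Kernel S (S × S)) (μ : Measure S) (α : ℝ)
    (R : J → (S → ℂ) → S → ℂ) (β : ℕ → ℝ) (𝔣 : ℕ → S → ℝ) (g : S → ℝ) : Prop :=
  ∀ (n ℓ : ℕ) (x : S),
    ‖QiterC P n (cf (𝔣 ℓ)) x‖ ≤ g x ∧
    ‖QiterC P n (cf (ctr μ (𝔣 ℓ))) x‖ ≤ α ^ n * g x ∧
    ‖QiterC P n (fhat μ R (𝔣 ℓ)) x‖ ≤ β n * α ^ n * g x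

/-- `𝒫 f*_{k,ℓ}(x) = ∑_{j ∈ J} θ_j^{ℓ-k} 𝒫(ℛ_j(f_k) ⊗_sym ℛ̄_j(f_ℓ))(x)`, where
`ℛ̄_j(f) = conj (ℛ_j f)` for real `f`. -/
def Pfstar {J : Type*} [Fintype J] (P : Kernel S (S × S)) (α : ℝ) (αj : J → ℂ)
    (R : J → (S → ℂ) → S → ℂ) (𝔣 : ℕ → S → ℝ) (k ℓ : ℕ) (x : S) : ℂ :=
  ∑ j, (αj j / (α : ℂ)) ^ ((ℓ : ℤ) - (k : ℤ)) *
    PtensSymC P (R j (cf (𝔣 k))) (fun y => starRingEnd ℂ (R j (cf (𝔣 ℓ)) y)) x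


section Aux

variable {S : Type*} [MeasurableSpace S] {Ω : Type*} [MeasurableSpace Ω]

lemma mem_gen {i : List Bool} {n : ℕ} : i ∈ gen n ↔ i.length = n := by
  constructor
  · intro hi
    simp only [gen, Finset.mem_image] at hi
    obtain ⟨f, _, rfl⟩ := hi
    simp
  · rintro rfl
    simp only [gen, Finset.mem_image]
    exact ⟨i.get, Finset.mem_univ _, List.ofFn_get i⟩

lemma gen_zero : gen 0 = {([] : List Bool)} := by
  ext i
  rw [mem_gen, Finset.mem_singleton, List.length_eq_zero_iff]

lemma gen_succ (n : ℕ) :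
    gen (n + 1) = ((gen n) ×ˢ (Finset.univ : Finset Bool)).image fun p => p.1 ++ [p.2] := by
  ext i
  simp only [Finset.mem_image, Finset.mem_product, Finset.mem_univ, and_true, mem_gen]
  constructor
  · intro hi
    rcases List.eq_nil_or_concat i with rfl | ⟨l, b, rfl⟩
    · simp at hi
    · refine ⟨(l, b), ?_, List.concat_eq_append.symm⟩
      simp only [List.length_concat] at hi
      show l.length = n
      omega
  · rintro ⟨⟨l, b⟩, hl, rfl⟩
    simp [hl]

lemma sum_gen_succ {M : Type*} [AddCommMonoid M] (n : ℕ) (f : List Bool → M) :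
    ∑ i ∈ gen (n + 1), f i = ∑ i ∈ gen n, (f (i ++ [false]) + f (i ++ [true])) := by
  rw [gen_succ, Finset.sum_image, Finset.sum_product]
  · refine Finset.sum_congr rfl fun i _ => ?_
    rw [Fintype.sum_bool]
    exact add_comm _ _
  · rintro ⟨a, b⟩ _ ⟨c, d⟩ _ (heq : a ++ [b] = c ++ [d])
    obtain ⟨h1, h2⟩ := List.append_inj' heq rfl
    simp only [List.cons.injEq, and_true] at h2
    exact Prod.ext h1 h2

end Aux
section Aux2
set_option linter.unusedSectionVars false

variable {S : Type*} [MeasurableSpace S] {Ω : Type*} [MeasurableSpace Ω]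

lemma measurable_Qop (P : Kernel S (S × S)) [IsSFiniteKernel P] {h : S → ℝ}
    (hh : Measurable h) : Measurable (Qop P h) := by
  have hsm : StronglyMeasurable fun q : S × (S × S) => (h q.2.1 + h q.2.2) / 2 :=
    (((hh.comp (measurable_fst.comp measurable_snd)).add
      (hh.comp (measurable_snd.comp measurable_snd))).div_const 2).stronglyMeasurable
  exact (hsm.integral_kernel_prod_right' (κ := P)).measurable

lemma measurable_Qiter (P : Kernel S (S × S)) [IsSFiniteKernel P] {h : S → ℝ}
    (hh : Measurable h) (n : ℕ) : Measurable (Qiter P n h) := by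
  induction n with
  | zero => exact hh
  | succ n ih =>
    rw [Qiter, Function.iterate_succ_apply']
    exact measurable_Qop P ih

lemma abs_Qop_le (P : Kernel S (S × S)) [IsMarkovKernel P] {h : S → ℝ} {C : ℝ}
    (hC : ∀ x, |h x| ≤ C) (x : S) : |Qop P h x| ≤ C := by
  have h1 : ‖∫ p, (h p.1 + h p.2) / 2 ∂(P x)‖ ≤ C * ((P x) Set.univ).toReal := by
    refine norm_integral_le_of_norm_le_const (Eventually.of_forall fun p => ?_)
    have h1 := hC p.1
    have h2 := hC p.2
    rw [Real.norm_eq_abs]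
    rw [abs_le] at h1 h2 ⊢
    constructor <;> [linarith; linarith]
  simpa [Qop, Real.norm_eq_abs] using h1

lemma abs_Qiter_le (P : Kernel S (S × S)) [IsMarkovKernel P] {h : S → ℝ} {C : ℝ}
    (hC : ∀ x, |h x| ≤ C) (n : ℕ) (x : S) : |Qiter P n h x| ≤ C := by
  induction n generalizing x with
  | zero => exact hC x
  | succ n ih =>
    rw [Qiter, Function.iterate_succ_apply']
    exact abs_Qop_le P (fun y => ih y) x

lemma integrable_of_abs_le {μ : Measure Ω} [IsFiniteMeasure μ] {f : Ω → ℝ}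
    (hf : AEStronglyMeasurable f μ) {C : ℝ} (h : ∀ x, |f x| ≤ C) : Integrable f μ :=
  (integrable_const C).mono' hf (Eventually.of_forall fun x => by
    rw [Real.norm_eq_abs]; exact h x)

variable {P : Kernel S (S × S)} [IsMarkovKernel P] {ν : Measure S} {F : Set (S → ℝ)}

omit [IsMarkovKernel P] in
lemma integrable_pair (hF : AssumpF P ν F) {f : S → ℝ} (hf : f ∈ F) (x : S) :
    Integrable (fun p : S × S => (f p.1 + f p.2) / 2) (P x) := by
  have h1 := hF.tens_int f hf _ (hF.const_mem 1) x
  have h2 := hF.tens_int _ (hF.const_mem 1) f hf x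
  simp only [mul_one] at h1
  simp only [one_mul] at h2
  exact (h1.add h2).div_const 2

lemma Qop_mem (hF : AssumpF P ν F) {f : S → ℝ} (hf : f ∈ F) : Qop P f ∈ F := by
  have heq : Qop P f = (2⁻¹ : ℝ) • (Ptens P f (fun _ => 1) + Ptens P (fun _ => 1) f) := by
    funext x
    have h1 := hF.tens_int f hf _ (hF.const_mem 1) x
    have h2 := hF.tens_int _ (hF.const_mem 1) f hf x
    have hfun : (fun p : S × S => (f p.1 + f p.2) / 2)
        = fun p : S × S => 2⁻¹ * (f p.1 * 1 + 1 * f p.2) := by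
      funext p; ring
    simp only [Qop, Ptens, Pi.smul_apply, Pi.add_apply, smul_eq_mul]
    rw [hfun, integral_const_mul, integral_add h1 h2]
  rw [heq]
  exact hF.smul_mem _ _ (hF.add_mem _ (hF.tens_mem f hf _ (hF.const_mem 1)) _
    (hF.tens_mem _ (hF.const_mem 1) f hf))

lemma Qiter_mem (hF : AssumpF P ν F) {f : S → ℝ} (hf : f ∈ F) (n : ℕ) : Qiter P n f ∈ F := by
  induction n with
  | zero => exact hf
  | succ n ih =>
    rw [Qiter, Function.iterate_succ_apply']
    exact Qop_mem hF ih

lemma Qop_sub_const (hF : AssumpF P ν F) {f : S → ℝ} (hf : f ∈ F) (c : ℝ) :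
    Qop P (fun x => f x - c) = fun x => Qop P f x - c := by
  funext x
  have hint := integrable_pair hF hf x
  have hfun : (fun p : S × S => ((f p.1 - c) + (f p.2 - c)) / 2)
      = fun p : S × S => (f p.1 + f p.2) / 2 - c := by
    funext p; ring
  show ∫ p, ((f p.1 - c) + (f p.2 - c)) / 2 ∂(P x) = Qop P f x - c
  rw [hfun, integral_sub hint (integrable_const c), integral_const]
  simp [Qop]

lemma Qiter_ctr (hF : AssumpF P ν F) {μ : Measure S} {f : S → ℝ} (hf : f ∈ F) (n : ℕ) :
    Qiter P n (ctr μ f) = fun x => Qiter P n f x - mInt μ f := by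
  induction n with
  | zero => rfl
  | succ n ih =>
    have e1 : Qiter P (n + 1) (ctr μ f) = Qop P (Qiter P n (ctr μ f)) := by
      simp [Qiter, Function.iterate_succ_apply']
    have e2 : Qiter P (n + 1) f = Qop P (Qiter P n f) := by
      simp [Qiter, Function.iterate_succ_apply']
    rw [e1, ih, Qop_sub_const hF (Qiter_mem hF hf n), e2]

lemma Qiter_le_of_le (hF : AssumpF P ν F) {f : S → ℝ} (hf : f ∈ F)
    {h : S → ℝ} (hmeas : Measurable h) {C : ℝ} (hC : ∀ x, |h x| ≤ C)
    (hle : ∀ x, h x ≤ f x) : ∀ (n : ℕ) (x : S), Qiter P n h x ≤ Qiter P n f x := by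
  intro n
  induction n with
  | zero => exact hle
  | succ n ih =>
    intro x
    have e1 : Qiter P (n + 1) h = Qop P (Qiter P n h) := by
      simp [Qiter, Function.iterate_succ_apply']
    have e2 : Qiter P (n + 1) f = Qop P (Qiter P n f) := by
      simp [Qiter, Function.iterate_succ_apply']
    rw [e1, e2]
    show Qop P (Qiter P n h) x ≤ Qop P (Qiter P n f) x
    refine integral_mono ?_ ?_ ?_
    · refine integrable_of_abs_le ?_ (C := C) ?_
      · exact ((((measurable_Qiter P hmeas n).comp measurable_fst).add
          ((measurable_Qiter P hmeas n).comp measurable_snd)).div_const 2).aestronglyMeasurable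
      · intro p
        have h1 := abs_Qiter_le P hC n p.1
        have h2 := abs_Qiter_le P hC n p.2
        rw [abs_le] at h1 h2 ⊢
        constructor <;> [linarith; linarith]
    · exact integrable_pair hF (Qiter_mem hF hf n) x
    · intro p
      have h1 := ih p.1
      have h2 := ih p.2
      simp only
      linarith

end Aux2
section Aux3
set_option linter.unusedSectionVars false

variable {S : Type*} [MeasurableSpace S] {Ω : Type*} [MeasurableSpace Ω]
variable {P : Kernel S (S × S)} [IsMarkovKernel P] {ν : Measure S} [IsProbabilityMeasure ν]
variable {m : Measure Ω} [IsProbabilityMeasure m] {X : List Bool → Ω → S}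

lemma step_integral (hBMC : IsBMC P ν m X) {h : S → ℝ} (hh : Measurable h)
    {C : ℝ} (hC : ∀ x, |h x| ≤ C) {n : ℕ} {i : List Bool} (hi : i ∈ gen n) :
    ∫ ω, (h (X (i ++ [false]) ω) + h (X (i ++ [true]) ω)) ∂m
      = 2 * ∫ ω, Qop P h (X i ω) ∂m := by
  classical
  set g : List Bool → S → S × S → ℝ :=
    fun j _ p => if j = i then h p.1 + h p.2 else 1 with hg
  have hmeas : ∀ j, Measurable fun q : S × S × S => g j q.1 q.2 := by
    intro j
    by_cases hj : j = i
    · simp only [hg, hj, if_true]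
      exact (hh.comp (measurable_fst.comp measurable_snd)).add
        (hh.comp (measurable_snd.comp measurable_snd))
    · simp only [hg, hj, if_false]
      exact measurable_const
  have hbd : ∀ j, ∃ C', ∀ x p, |g j x p| ≤ C' := by
    intro j
    refine ⟨2 * |C| + 1, fun x p => ?_⟩
    by_cases hj : j = i
    · simp only [hg, hj, if_true]
      have h1 := hC p.1
      have h2 := hC p.2
      have : C ≤ |C| := le_abs_self C
      rw [abs_le] at h1 h2 ⊢
      have hC0 : 0 ≤ |C| := abs_nonneg C
      constructor <;> nlinarith [neg_abs_le C]
    · simp only [hg, hj, if_false, abs_one]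
      nlinarith [abs_nonneg C]
  have hbr := hBMC.branching n g hmeas hbd
  have hprod1 : (fun ω => ∏ j ∈ gen n, g j (X j ω) (X (j ++ [false]) ω, X (j ++ [true]) ω))
      = fun ω => h (X (i ++ [false]) ω) + h (X (i ++ [true]) ω) := by
    funext ω
    rw [Finset.prod_eq_single_of_mem i hi (fun j _ hj => by simp [hg, hj])]
    simp [hg]
  have hprod2 : (fun ω => ∏ j ∈ gen n, ∫ p, g j (X j ω) p ∂(P (X j ω)))
      = fun ω => 2 * Qop P h (X i ω) := by
    funext ω
    rw [Finset.prod_eq_single_of_mem i hi (fun j _ hj => by simp [hg, hj])]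
    simp only [hg, if_pos rfl, Qop]
    rw [integral_div]
    ring
  rw [hprod1, hprod2] at hbr
  have hm_le : sigmaTree X n ≤ (inferInstance : MeasurableSpace Ω) :=
    iSup₂_le fun j _ => (hBMC.meas j).comap_le
  haveI : IsFiniteMeasure (m.trim hm_le) := isFiniteMeasure_trim hm_le
  calc ∫ ω, (h (X (i ++ [false]) ω) + h (X (i ++ [true]) ω)) ∂m
      = ∫ ω, (m[fun ω => h (X (i ++ [false]) ω) + h (X (i ++ [true]) ω)|sigmaTree X n]) ω ∂m :=
        (integral_condExp hm_le).symm
    _ = ∫ ω, 2 * Qop P h (X i ω) ∂m := integral_congr_ae hbr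
    _ = 2 * ∫ ω, Qop P h (X i ω) ∂m := integral_const_mul 2 _

lemma sum_gen_integral (hBMC : IsBMC P ν m X) :
    ∀ (k : ℕ) (h : S → ℝ), Measurable h → ∀ (C : ℝ), (∀ x, |h x| ≤ C) →
    ∑ i ∈ gen k, ∫ ω, h (X i ω) ∂m = 2 ^ k * ∫ x, Qiter P k h x ∂ν := by
  intro k
  induction k with
  | zero =>
    intro h hh C hC
    rw [gen_zero, Finset.sum_singleton, ← hBMC.init]
    simp only [Qiter, Function.iterate_zero, id_eq, pow_zero, one_mul]
    rw [integral_map (hBMC.meas []).aemeasurable hh.aestronglyMeasurable]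
  | succ k ih =>
    intro h hh C hC
    have hint : ∀ j : List Bool, Integrable (fun ω => h (X j ω)) m := fun j =>
      integrable_of_abs_le ((hh.comp (hBMC.meas j)).aestronglyMeasurable) (fun ω => hC _)
    calc ∑ i ∈ gen (k + 1), ∫ ω, h (X i ω) ∂m
        = ∑ i ∈ gen k, ((∫ ω, h (X (i ++ [false]) ω) ∂m) + ∫ ω, h (X (i ++ [true]) ω) ∂m) :=
          sum_gen_succ k fun i => ∫ ω, h (X i ω) ∂m
      _ = ∑ i ∈ gen k, 2 * ∫ ω, Qop P h (X i ω) ∂m := by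
          refine Finset.sum_congr rfl fun i hi => ?_
          rw [← integral_add (hint _) (hint _)]
          exact step_integral hBMC hh hC hi
      _ = 2 * ∑ i ∈ gen k, ∫ ω, Qop P h (X i ω) ∂m := by rw [Finset.mul_sum]
      _ = 2 * (2 ^ k * ∫ x, Qiter P k (Qop P h) x ∂ν) := by
          rw [ih (Qop P h) (measurable_Qop P hh) C (fun x => abs_Qop_le P hC x)]
      _ = 2 ^ (k + 1) * ∫ x, Qiter P (k + 1) h x ∂ν := by
          have e : Qiter P (k + 1) h = Qiter P k (Qop P h) := by
            simp [Qiter, Function.iterate_succ_apply]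
          rw [e]; ring

end Aux3
/-- **Lemma (sub-critical: the remainder `R₂` vanishes in `L¹`).** -/
theorem subcritical_R2
    {S : Type*} [MeasurableSpace S] {Ω : Type*} [MeasurableSpace Ω]
    (P : Kernel S (S × S)) [IsMarkovKernel P]
    (ν : Measure S) [IsProbabilityMeasure ν]
    (m : Measure Ω) [IsProbabilityMeasure m]
    (X : List Bool → Ω → S) (hBMC : IsBMC P ν m X)
    (F : Set (S → ℝ)) (hF : AssumpF P ν F)
    (μ : Measure S) (α : ℝ) (hα0 : 0 < α) (hα1 : α < 1 / Real.sqrt 2)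
    (hH2 : AssumpH2 P F μ α)
    (𝔣 : ℕ → S → ℝ) (h𝔣 : ∀ ℓ, 𝔣 ℓ ∈ F)
    (g : S → ℝ) (hg : g ∈ F) (hunif : UnifH2 P μ α 𝔣 g)
    (p : ℕ → ℕ) (hp_mono : Monotone p) (hp_pos : ∀ n, 1 ≤ p n)
    (hp_lt : ∀ᶠ n in atTop, p n < n)
    (hp_ratio : Tendsto (fun n => (p n : ℝ) / n) atTop (𝓝 1))
    (hp_log : ∀ lam : ℝ, 0 < lam →
      Tendsto (fun n : ℕ => (n : ℝ) - p n - lam * Real.log n) atTop atTop) :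
    Tendsto (fun n => ∫ ω,
        ((2 : ℝ) ^ n)⁻¹ * ∑ i ∈ gen (n - p n),
          (∑ ℓ ∈ Finset.range (p n + 1), (2 : ℝ) ^ (p n - ℓ) *
              Qiter P (p n - ℓ) (ctr μ (𝔣 ℓ)) (X i ω)) ^ 2 ∂m)
      atTop (𝓝 0) := by
  classical
  haveI := hH2.prob
  have hgmeas : Measurable g := hF.meas g hg
  have hg0 : ∀ x, 0 ≤ g x := fun x => (abs_nonneg _).trans (hunif 0 0 x).1
  have hsqrt2 : (1:ℝ) ≤ Real.sqrt 2 := by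
    rw [show (1:ℝ) = Real.sqrt 1 from Real.sqrt_one.symm]
    exact Real.sqrt_le_sqrt (by norm_num)
  have hα_lt1 : α < 1 := lt_of_lt_of_le hα1 (by
    rw [div_le_one (lt_of_lt_of_le one_pos hsqrt2)]; exact hsqrt2)
  obtain ⟨g', hg'F, hg'⟩ := hH2.erg (fun x => g x ^ 2) (hF.sq_mem g hg)
  have hg'0 : ∀ x, 0 ≤ g' x := by
    intro x
    have h1 := (abs_nonneg _).trans (hg' 1 x)
    simp only [pow_one] at h1
    nlinarith
  set B₀ : ℝ := mInt μ (fun x => g x ^ 2) with hB₀def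
  set B : ℝ := B₀ + ∫ x, g' x ∂ν with hBdef
  have hB₀0 : 0 ≤ B₀ := integral_nonneg fun x => sq_nonneg _
  have hB0 : 0 ≤ B := add_nonneg hB₀0 (integral_nonneg hg'0)
  have hQsq : ∀ (k : ℕ) (x : S), Qiter P k (fun x => g x ^ 2) x ≤ B₀ + g' x := by
    intro k x
    have h1 := hg' k x
    have h2 : α ^ k * g' x ≤ g' x := by
      nlinarith [pow_le_one₀ hα0.le hα_lt1.le (n := k), hg'0 x, pow_nonneg hα0.le k]
    rw [abs_le] at h1
    linarith [h1.2]
  have hctrmeas : ∀ ℓ : ℕ, Measurable (ctr μ (𝔣 ℓ)) := fun ℓ =>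
    (hF.meas _ (h𝔣 ℓ)).sub measurable_const
  have hQctr : ∀ (j ℓ : ℕ) (x : S), |Qiter P j (ctr μ (𝔣 ℓ)) x| ≤ α ^ j * g x := by
    intro j ℓ x
    rw [Qiter_ctr hF (h𝔣 ℓ) j]
    exact (hunif j ℓ x).2
  set c : ℕ → ℝ := fun n => ∑ ℓ ∈ Finset.range (p n + 1), (2 * α) ^ (p n - ℓ) with hcdef
  have hc0 : ∀ n, 0 ≤ c n := fun n =>
    Finset.sum_nonneg fun ℓ _ => pow_nonneg (by nlinarith) _
  have hinner : ∀ (n : ℕ) (x : S),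
      (∑ ℓ ∈ Finset.range (p n + 1), (2 : ℝ) ^ (p n - ℓ) *
          Qiter P (p n - ℓ) (ctr μ (𝔣 ℓ)) x) ^ 2 ≤ c n ^ 2 * g x ^ 2 := by
    intro n x
    have habs : |∑ ℓ ∈ Finset.range (p n + 1), (2:ℝ) ^ (p n - ℓ) *
        Qiter P (p n - ℓ) (ctr μ (𝔣 ℓ)) x| ≤ c n * g x := by
      refine (Finset.abs_sum_le_sum_abs _ _).trans ?_
      simp only [hcdef]
      rw [Finset.sum_mul]
      refine Finset.sum_le_sum fun ℓ _ => ?_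
      have hQ := hQctr (p n - ℓ) ℓ x
      calc |(2:ℝ) ^ (p n - ℓ) * Qiter P (p n - ℓ) (ctr μ (𝔣 ℓ)) x|
          = 2 ^ (p n - ℓ) * |Qiter P (p n - ℓ) (ctr μ (𝔣 ℓ)) x| := by
            rw [abs_mul, abs_pow]; norm_num
        _ ≤ 2 ^ (p n - ℓ) * (α ^ (p n - ℓ) * g x) := by
            exact mul_le_mul_of_nonneg_left hQ (by positivity)
        _ = (2 * α) ^ (p n - ℓ) * g x := by rw [mul_pow]; ring
    rw [abs_le] at habs
    calc (∑ ℓ ∈ Finset.range (p n + 1), (2:ℝ) ^ (p n - ℓ) *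
          Qiter P (p n - ℓ) (ctr μ (𝔣 ℓ)) x) ^ 2
        ≤ (c n * g x) ^ 2 := sq_le_sq' habs.1 habs.2
      _ = c n ^ 2 * g x ^ 2 := by ring
  have hRmeas : ∀ n : ℕ, Measurable fun ω =>
      ((2:ℝ) ^ n)⁻¹ * ∑ i ∈ gen (n - p n), (∑ ℓ ∈ Finset.range (p n + 1),
        (2:ℝ) ^ (p n - ℓ) * Qiter P (p n - ℓ) (ctr μ (𝔣 ℓ)) (X i ω)) ^ 2 := by
    intro n
    refine Measurable.const_mul ?_ _
    refine Finset.measurable_sum _ fun i _ => ?_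
    refine Measurable.pow_const ?_ 2
    exact Finset.measurable_sum _ fun ℓ _ =>
      ((measurable_Qiter P (hctrmeas ℓ) _).comp (hBMC.meas i)).const_mul _
  -- lintegral bound on sum of g² over a generation
  have hGsum : ∀ k : ℕ, ∑ i ∈ gen k, ∫⁻ ω, ENNReal.ofReal (g (X i ω) ^ 2) ∂m
      ≤ ENNReal.ofReal (2 ^ k * B) := by
    intro k
    set hM : ℕ → S → ℝ := fun M x => min (g x ^ 2) (M : ℝ) with hMdef
    have hMmeas : ∀ M, Measurable (hM M) := fun M => (hgmeas.pow_const 2).min measurable_const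
    have hM0 : ∀ M x, 0 ≤ hM M x := fun M x => le_min (sq_nonneg _) (Nat.cast_nonneg M)
    have hMabs : ∀ M x, |hM M x| ≤ (M : ℝ) := fun M x => by
      rw [abs_of_nonneg (hM0 M x)]; exact min_le_right _ _
    have hMle : ∀ M x, hM M x ≤ g x ^ 2 := fun M x => min_le_left _ _
    have hstep : ∀ M : ℕ, ∑ i ∈ gen k, ∫ ω, hM M (X i ω) ∂m ≤ 2 ^ k * B := by
      intro M
      rw [sum_gen_integral hBMC k (hM M) (hMmeas M) M (hMabs M)]
      have hptwise : ∀ x, Qiter P k (hM M) x ≤ B₀ + g' x := fun x =>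
        (Qiter_le_of_le hF (hF.sq_mem g hg) (hMmeas M) (hMabs M) (hMle M) k x).trans (hQsq k x)
      have hint1 : Integrable (fun x => Qiter P k (hM M) x) ν :=
        integrable_of_abs_le (measurable_Qiter P (hMmeas M) k).aestronglyMeasurable
          (abs_Qiter_le P (hMabs M) k)
      have hint2 : Integrable (fun x => B₀ + g' x) ν :=
        (integrable_const B₀).add (hF.int_nu g' hg'F)
      have hmono := integral_mono hint1 hint2 hptwise
      rw [integral_add (integrable_const B₀) (hF.int_nu g' hg'F), integral_const] at hmono
      simp only [measure_univ, ENNReal.toReal_one, probReal_univ, smul_eq_mul, one_mul] at hmono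
      exact mul_le_mul_of_nonneg_left hmono (by positivity)
    have hsup : ∀ i : List Bool, ∫⁻ ω, ENNReal.ofReal (g (X i ω) ^ 2) ∂m
        = ⨆ M : ℕ, ∫⁻ ω, ENNReal.ofReal (hM M (X i ω)) ∂m := by
      intro i
      have hpt : ∀ ω, (⨆ M : ℕ, ENNReal.ofReal (hM M (X i ω)))
          = ENNReal.ofReal (g (X i ω) ^ 2) := by
        intro ω
        refine le_antisymm (iSup_le fun M => ENNReal.ofReal_le_ofReal (hMle M _)) ?_
        refine le_iSup_of_le ⌈g (X i ω) ^ 2⌉₊ ?_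
        simp only [hMdef]
        rw [min_eq_left (Nat.le_ceil _)]
      calc ∫⁻ ω, ENNReal.ofReal (g (X i ω) ^ 2) ∂m
          = ∫⁻ ω, ⨆ M : ℕ, ENNReal.ofReal (hM M (X i ω)) ∂m :=
            lintegral_congr fun ω => (hpt ω).symm
        _ = ⨆ M : ℕ, ∫⁻ ω, ENNReal.ofReal (hM M (X i ω)) ∂m := by
            refine MeasureTheory.lintegral_iSup
              (fun M => ((hMmeas M).comp (hBMC.meas i)).ennreal_ofReal) ?_
            intro M M' hMM' ω
            exact ENNReal.ofReal_le_ofReal (min_le_min le_rfl (Nat.cast_le.mpr hMM'))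
    calc ∑ i ∈ gen k, ∫⁻ ω, ENNReal.ofReal (g (X i ω) ^ 2) ∂m
        = ∑ i ∈ gen k, ⨆ M : ℕ, ∫⁻ ω, ENNReal.ofReal (hM M (X i ω)) ∂m :=
          Finset.sum_congr rfl fun i _ => hsup i
      _ = ⨆ M : ℕ, ∑ i ∈ gen k, ∫⁻ ω, ENNReal.ofReal (hM M (X i ω)) ∂m := by
          refine ENNReal.finsetSum_iSup_of_monotone fun i M M' hMM' => ?_
          exact lintegral_mono fun ω =>
            ENNReal.ofReal_le_ofReal (min_le_min le_rfl (Nat.cast_le.mpr hMM'))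
      _ ≤ ENNReal.ofReal (2 ^ k * B) := by
          refine iSup_le fun M => ?_
          have hei : ∀ i : List Bool, ∫⁻ ω, ENNReal.ofReal (hM M (X i ω)) ∂m
              = ENNReal.ofReal (∫ ω, hM M (X i ω) ∂m) := by
            intro i
            rw [← MeasureTheory.ofReal_integral_eq_lintegral_ofReal]
            · exact integrable_of_abs_le ((hMmeas M).comp (hBMC.meas i)).aestronglyMeasurable
                (fun ω => hMabs M _)
            · exact Eventually.of_forall fun ω => hM0 M _
          rw [Finset.sum_congr rfl fun i _ => hei i, ← ENNReal.ofReal_sum_of_nonneg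
            (fun i _ => integral_nonneg fun ω => hM0 M _)]
          exact ENNReal.ofReal_le_ofReal (hstep M)
  -- per-n bound on the integral
  have hkey : ∀ n : ℕ, (∫ ω, ((2:ℝ) ^ n)⁻¹ * ∑ i ∈ gen (n - p n),
      (∑ ℓ ∈ Finset.range (p n + 1), (2:ℝ) ^ (p n - ℓ) *
        Qiter P (p n - ℓ) (ctr μ (𝔣 ℓ)) (X i ω)) ^ 2 ∂m)
      ≤ ((2:ℝ) ^ n)⁻¹ * c n ^ 2 * (2 ^ (n - p n) * B) := by
    intro n
    have hR0 : ∀ ω : Ω, 0 ≤ ((2:ℝ) ^ n)⁻¹ * ∑ i ∈ gen (n - p n),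
        (∑ ℓ ∈ Finset.range (p n + 1), (2:ℝ) ^ (p n - ℓ) *
          Qiter P (p n - ℓ) (ctr μ (𝔣 ℓ)) (X i ω)) ^ 2 := fun ω =>
      mul_nonneg (by positivity) (Finset.sum_nonneg fun i _ => sq_nonneg _)
    rw [integral_eq_lintegral_of_nonneg_ae (Eventually.of_forall hR0)
      (hRmeas n).aestronglyMeasurable]
    refine ENNReal.toReal_le_of_le_ofReal
      (mul_nonneg (mul_nonneg (by positivity) (sq_nonneg _))
        (mul_nonneg (by positivity) hB0)) ?_
    have hmeas2 : ∀ i : List Bool, Measurable fun ω => ENNReal.ofReal (g (X i ω) ^ 2) :=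
      fun i => ((hgmeas.comp (hBMC.meas i)).pow_const 2).ennreal_ofReal
    calc ∫⁻ ω, ENNReal.ofReal (((2:ℝ) ^ n)⁻¹ * ∑ i ∈ gen (n - p n),
          (∑ ℓ ∈ Finset.range (p n + 1), (2:ℝ) ^ (p n - ℓ) *
            Qiter P (p n - ℓ) (ctr μ (𝔣 ℓ)) (X i ω)) ^ 2) ∂m
        ≤ ∫⁻ ω, ENNReal.ofReal (((2:ℝ) ^ n)⁻¹ * c n ^ 2 *
            ∑ i ∈ gen (n - p n), g (X i ω) ^ 2) ∂m := by
          refine lintegral_mono fun ω => ENNReal.ofReal_le_ofReal ?_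
          calc ((2:ℝ) ^ n)⁻¹ * ∑ i ∈ gen (n - p n),
              (∑ ℓ ∈ Finset.range (p n + 1), (2:ℝ) ^ (p n - ℓ) *
                Qiter P (p n - ℓ) (ctr μ (𝔣 ℓ)) (X i ω)) ^ 2
              ≤ ((2:ℝ) ^ n)⁻¹ * ∑ i ∈ gen (n - p n), c n ^ 2 * g (X i ω) ^ 2 :=
                mul_le_mul_of_nonneg_left
                  (Finset.sum_le_sum fun i _ => hinner n (X i ω)) (by positivity)
            _ = ((2:ℝ) ^ n)⁻¹ * c n ^ 2 * ∑ i ∈ gen (n - p n), g (X i ω) ^ 2 := by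
                rw [← Finset.mul_sum]; ring
      _ = ENNReal.ofReal (((2:ℝ) ^ n)⁻¹ * c n ^ 2) *
            ∑ i ∈ gen (n - p n), ∫⁻ ω, ENNReal.ofReal (g (X i ω) ^ 2) ∂m := by
          rw [← MeasureTheory.lintegral_finset_sum _ (fun i _ => hmeas2 i),
            ← MeasureTheory.lintegral_const_mul _
              (Finset.measurable_sum _ fun i _ => hmeas2 i)]
          refine lintegral_congr fun ω => ?_
          rw [ENNReal.ofReal_mul (mul_nonneg (by positivity) (sq_nonneg _)),
            ENNReal.ofReal_sum_of_nonneg (fun i _ => sq_nonneg _)]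
      _ ≤ ENNReal.ofReal (((2:ℝ) ^ n)⁻¹ * c n ^ 2) * ENNReal.ofReal (2 ^ (n - p n) * B) :=
          mul_le_mul_right (hGsum (n - p n)) _
      _ = ENNReal.ofReal (((2:ℝ) ^ n)⁻¹ * c n ^ 2 * (2 ^ (n - p n) * B)) := by
          rw [← ENNReal.ofReal_mul (mul_nonneg (by positivity) (sq_nonneg _))]
  -- the limit machinery
  set r : ℝ := max (1/2) (2 * α ^ 2) with hrdef
  have hr0 : (0:ℝ) < r := lt_of_lt_of_le (by norm_num) (le_max_left _ _)
  have h2α2 : 2 * α ^ 2 < 1 := by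
    have hs : Real.sqrt 2 * Real.sqrt 2 = 2 := Real.mul_self_sqrt (by norm_num)
    have hspos : (0:ℝ) < Real.sqrt 2 := lt_of_lt_of_le one_pos hsqrt2
    have h1 : α * Real.sqrt 2 < 1 := by
      have h2 := mul_lt_mul_of_pos_right hα1 hspos
      rw [div_mul_eq_mul_div, one_mul, div_self hspos.ne'] at h2
      exact h2
    nlinarith [mul_nonneg hα0.le hspos.le]
  have hr1 : r < 1 := max_lt (by norm_num) h2α2
  have hptop : Tendsto p atTop atTop := by
    rw [tendsto_atTop_atTop]
    intro b
    have h1 : ∀ᶠ n : ℕ in atTop, (1:ℝ)/2 < (p n : ℝ)/n :=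
      hp_ratio.eventually (eventually_gt_nhds (by norm_num))
    have h2 : ∀ᶠ n : ℕ in atTop, 2 * b + 1 ≤ n := eventually_ge_atTop _
    obtain ⟨N, hN⟩ := eventually_atTop.mp (h1.and h2)
    refine ⟨N, fun n hn => ?_⟩
    obtain ⟨hn1, hn2⟩ := hN n hn
    have hnpos : (0:ℝ) < (n:ℝ) := by
      have : 0 < n := by omega
      exact_mod_cast this
    rw [div_lt_div_iff₀ (by norm_num) hnpos] at hn1
    have h3 : (n:ℝ) < (p n : ℝ) * 2 := by linarith
    have h4 : n < p n * 2 := by exact_mod_cast h3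
    omega
  have hφ : Tendsto (fun k : ℕ => ((k:ℝ) + 1) ^ 2 * r ^ k) atTop (𝓝 0) := by
    have h0 := tendsto_pow_const_mul_const_pow_of_lt_one 2 hr0.le hr1
    have h1 : Tendsto (fun k : ℕ => (((k + 1 : ℕ)):ℝ) ^ 2 * r ^ (k + 1)) atTop (𝓝 0) :=
      h0.comp (tendsto_add_atTop_nat 1)
    have h2 := h1.const_mul r⁻¹
    rw [mul_zero] at h2
    refine h2.congr fun k => ?_
    have hrne : r ≠ 0 := hr0.ne'
    push_cast
    rw [pow_succ]
    field_simp
    ring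
  have hE : Tendsto (fun n => ((p n : ℝ) + 1) ^ 2 * r ^ (p n) * B) atTop (𝓝 0) := by
    have h1 := (hφ.comp hptop).mul_const B
    rw [zero_mul] at h1
    exact h1
  have hDE : ∀ᶠ n in atTop, ((2:ℝ) ^ n)⁻¹ * c n ^ 2 * (2 ^ (n - p n) * B)
      ≤ ((p n : ℝ) + 1) ^ 2 * r ^ (p n) * B := by
    filter_upwards [hp_lt] with n hn
    have hsplit : ((2:ℝ) ^ n)⁻¹ * 2 ^ (n - p n) = ((2:ℝ) ^ (p n))⁻¹ := by
      have hsp : (2:ℝ) ^ n = 2 ^ (p n) * 2 ^ (n - p n) := by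
        rw [← pow_add]; congr 1; omega
      rw [hsp]
      have h1 : ((2:ℝ) ^ (p n)) ≠ 0 := by positivity
      have h2 : ((2:ℝ) ^ (n - p n)) ≠ 0 := by positivity
      field_simp
    have hcb : c n ≤ ((p n : ℝ) + 1) * max 1 ((2*α) ^ (p n)) := by
      simp only [hcdef]
      calc ∑ ℓ ∈ Finset.range (p n + 1), (2*α) ^ (p n - ℓ)
          ≤ ∑ _ℓ ∈ Finset.range (p n + 1), max 1 ((2*α) ^ (p n)) := by
            refine Finset.sum_le_sum fun ℓ _ => ?_
            rcases le_or_gt (2*α) 1 with h | h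
            · exact le_trans (pow_le_one₀ (by nlinarith) h) (le_max_left _ _)
            · exact le_trans (pow_le_pow_right₀ h.le (Nat.sub_le _ _)) (le_max_right _ _)
        _ = ((p n : ℝ) + 1) * max 1 ((2*α) ^ (p n)) := by
            rw [Finset.sum_const, Finset.card_range, nsmul_eq_mul]
            push_cast; ring
    have hmaxb : (max 1 ((2*α) ^ (p n))) ^ 2 * ((2:ℝ) ^ (p n))⁻¹ ≤ r ^ (p n) := by
      rcases le_or_gt (2*α) 1 with h | h
      · rw [max_eq_left (pow_le_one₀ (by nlinarith) h), one_pow, one_mul, ← inv_pow]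
        refine pow_le_pow_left₀ (by norm_num) ?_ _
        exact le_trans (by norm_num) (le_max_left (1/2 : ℝ) (2 * α ^ 2))
      · rw [max_eq_right (one_le_pow₀ h.le)]
        have e : ((2*α) ^ (p n)) ^ 2 * ((2:ℝ) ^ (p n))⁻¹ = (2 * α ^ 2) ^ (p n) := by
          rw [← pow_mul, Nat.mul_comm, pow_mul, ← inv_pow, ← mul_pow]
          congr 1
          ring
        rw [e]
        exact pow_le_pow_left₀ (by positivity) (le_max_right _ _) _
    calc ((2:ℝ) ^ n)⁻¹ * c n ^ 2 * (2 ^ (n - p n) * B)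
        = c n ^ 2 * ((2:ℝ) ^ (p n))⁻¹ * B := by rw [← hsplit]; ring
      _ ≤ (((p n : ℝ) + 1) * max 1 ((2*α) ^ (p n))) ^ 2 * ((2:ℝ) ^ (p n))⁻¹ * B := by
          refine mul_le_mul_of_nonneg_right
            (mul_le_mul_of_nonneg_right (pow_le_pow_left₀ (hc0 n) hcb 2) (by positivity)) hB0
      _ = ((p n : ℝ) + 1) ^ 2 * ((max 1 ((2*α) ^ (p n))) ^ 2 * ((2:ℝ) ^ (p n))⁻¹) * B := by
          ring
      _ ≤ ((p n : ℝ) + 1) ^ 2 * r ^ (p n) * B := by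
          refine mul_le_mul_of_nonneg_right
            (mul_le_mul_of_nonneg_left hmaxb (by positivity)) hB0
  refine tendsto_of_tendsto_of_tendsto_of_le_of_le' tendsto_const_nhds hE ?_ ?_
  · exact Eventually.of_forall fun n => integral_nonneg fun ω =>
      mul_nonneg (by positivity) (Finset.sum_nonneg fun i _ => sq_nonneg _)
  · filter_upwards [hDE] with n hn
    exact (hkey n).trans hn

end BMC
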